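/- Let a > 0 and ϱ ∈ (−1, 0]. Then for every y ∈ ℝ, the rate function is bounded from below as J_X(y; a, ϱ) ≥ 2ay. -/

import Mathlib

open MeasureTheory ProbabilityTheory Filter Real
open intervalIntegral Set

/-- The variational rate function `I(u,v)`: infimum of `4∫₀¹ f'(z)² dz` over absolutely
continuous `f : [0,1] → ℝ` (written as `f(z) = ∫₀ᶻ g`) with square-integrable derivative `g`,
`f(0) = 0`, `∫₀¹ e^{2 f(z)} dz = u` and `e^{f(1)} = v`. -/
noncomputable def ratefun (u v : ℝ) : ℝ :=
  sInf {r : ℝ | ∃ g : ℝ → ℝ,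
    IntervalIntegrable g volume 0 1 ∧
    IntervalIntegrable (fun z => (g z) ^ 2) volume 0 1 ∧
    (∫ z in (0:ℝ)..(1:ℝ), Real.exp (2 * ∫ t in (0:ℝ)..z, g t)) = u ∧
    Real.exp (∫ t in (0:ℝ)..(1:ℝ), g t) = v ∧
    r = 4 * ∫ z in (0:ℝ)..(1:ℝ), (g z) ^ 2}



lemma my_parts {f g : ℝ → ℝ} {x : ℝ} (hx : 0 ≤ x)
    (hf : IntervalIntegrable f volume 0 x) (hg : IntervalIntegrable g volume 0 x) :
    (∫ t in (0:ℝ)..x, f t * ∫ s in (0:ℝ)..t, g s)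
      + (∫ t in (0:ℝ)..x, g t * ∫ s in (0:ℝ)..t, f s)
      = (∫ t in (0:ℝ)..x, f t) * (∫ t in (0:ℝ)..x, g t) := by
  have hfi : IntegrableOn f (Ioc 0 x) volume := hf.1
  have hgi : IntegrableOn g (Ioc 0 x) volume := hg.1
  have hK : MeasurableSet {p : ℝ × ℝ | p.2 ≤ p.1} := measurableSet_le measurable_snd measurable_fst
  set φ : ℝ → ℝ → ℝ := fun t s => ({p : ℝ × ℝ | p.2 ≤ p.1}).indicator (fun q => f q.1 * g q.2) (t, s) with hφdef
  have hφ : Integrable (Function.uncurry φ)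
      ((volume.restrict (Ioc (0:ℝ) x)).prod (volume.restrict (Ioc (0:ℝ) x))) := by
    have : Function.uncurry φ = ({p : ℝ × ℝ | p.2 ≤ p.1}).indicator (fun q => f q.1 * g q.2) := rfl
    rw [this]
    exact (hfi.mul_prod hgi).indicator hK
  have swap := integral_integral_swap hφ
  -- LHS of swap
  have hL : (∫ t, ∫ s, φ t s ∂(volume.restrict (Ioc (0:ℝ) x)) ∂(volume.restrict (Ioc (0:ℝ) x)))
      = ∫ t in Ioc (0:ℝ) x, f t * ∫ s in (0:ℝ)..t, g s := by
    apply setIntegral_congr_fun measurableSet_Ioc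
    intro t ht
    have h1 : ∀ s, φ t s = f t * (Iic t).indicator g s := by
      intro s; by_cases h : s ≤ t <;> simp [hφdef, Set.indicator, h]
    show (∫ s in Ioc (0:ℝ) x, φ t s) = _
    simp only [h1]
    rw [MeasureTheory.integral_const_mul, setIntegral_indicator measurableSet_Iic]
    show f t * _ = f t * _
    have h2 : Ioc (0:ℝ) x ∩ Iic t = Ioc 0 t := by
      rw [Set.Ioc_inter_Iic, min_eq_right ht.2]
    rw [h2, intervalIntegral.integral_of_le ht.1.le]
  -- RHS of swap
  have hR : (∫ s, ∫ t, φ t s ∂(volume.restrict (Ioc (0:ℝ) x)) ∂(volume.restrict (Ioc (0:ℝ) x)))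
      = ∫ s in Ioc (0:ℝ) x, g s * ((∫ t in (0:ℝ)..x, f t) - ∫ t in (0:ℝ)..s, f t) := by
    apply setIntegral_congr_fun measurableSet_Ioc
    intro s hs
    have h1 : ∀ t, φ t s = (Ici s).indicator f t * g s := by
      intro t; by_cases h : s ≤ t <;> simp [hφdef, Set.indicator, h]
    show (∫ t in Ioc (0:ℝ) x, φ t s) = _
    simp only [h1]
    rw [MeasureTheory.integral_mul_const, setIntegral_indicator measurableSet_Ici]
    have h2 : Ioc (0:ℝ) x ∩ Ici s = Icc s x := by
      ext t; constructor
      · rintro ⟨⟨h1', h2'⟩, h3'⟩; exact ⟨h3', h2'⟩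
      · rintro ⟨h1', h2'⟩; exact ⟨⟨lt_of_lt_of_le hs.1 h1', h2'⟩, h1'⟩
    have hsub : IntervalIntegrable f volume 0 s :=
      hf.mono_set (by rw [uIcc_of_le hs.1.le, uIcc_of_le hx]; exact Icc_subset_Icc le_rfl hs.2)
    have hsx : IntervalIntegrable f volume s x :=
      hf.mono_set (by rw [uIcc_of_le hs.2, uIcc_of_le hx]; exact Icc_subset_Icc hs.1.le le_rfl)
    rw [h2, MeasureTheory.integral_Icc_eq_integral_Ioc, ← intervalIntegral.integral_of_le hs.2,
      ← intervalIntegral.integral_interval_sub_left hf hsub]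
    ring
  -- continuity of primitives
  have hFcont : ContinuousOn (fun t => ∫ s in (0:ℝ)..t, f s) (Set.uIcc 0 x) :=
    intervalIntegral.continuousOn_primitive_interval
      (by rwa [uIcc_of_le hx, integrableOn_Icc_iff_integrableOn_Ioc])
  have hGcont : ContinuousOn (fun t => ∫ s in (0:ℝ)..t, g s) (Set.uIcc 0 x) :=
    intervalIntegral.continuousOn_primitive_interval
      (by rwa [uIcc_of_le hx, integrableOn_Icc_iff_integrableOn_Ioc])
  have hgF : Integrable (fun s => g s * ∫ t in (0:ℝ)..s, f t) (volume.restrict (Ioc (0:ℝ) x)) :=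
    (hg.mul_continuousOn hFcont).1
  have hgFx : Integrable (fun s => g s * ∫ t in (0:ℝ)..x, f t) (volume.restrict (Ioc (0:ℝ) x)) :=
    hgi.mul_const _
  rw [hL, hR] at swap
  have hsplit : (∫ s in Ioc (0:ℝ) x, g s * ((∫ t in (0:ℝ)..x, f t) - ∫ t in (0:ℝ)..s, f t))
      = (∫ s in Ioc (0:ℝ) x, g s * ∫ t in (0:ℝ)..x, f t)
        - ∫ s in Ioc (0:ℝ) x, g s * ∫ t in (0:ℝ)..s, f t := by
    rw [← integral_sub hgFx hgF]; congr 1; funext s; ring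
  rw [hsplit, MeasureTheory.integral_mul_const] at swap
  simp only [intervalIntegral.integral_of_le hx] at swap ⊢
  linarith [swap]

lemma my_sub_int {g : ℝ → ℝ} (hg : IntervalIntegrable g volume 0 1)
    {x : ℝ} (hx : x ∈ Set.Icc (0:ℝ) 1) : IntervalIntegrable g volume 0 x :=
  hg.mono_set (by rw [uIcc_of_le hx.1, uIcc_of_le zero_le_one]; exact Icc_subset_Icc le_rfl hx.2)

lemma my_F_cont {g : ℝ → ℝ} (hg : IntervalIntegrable g volume 0 1)
    {x : ℝ} (hx : x ∈ Set.Icc (0:ℝ) 1) :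
    ContinuousOn (fun t => ∫ s in (0:ℝ)..t, g s) (Set.uIcc 0 x) :=
  intervalIntegral.continuousOn_primitive_interval (by
    rw [uIcc_of_le hx.1, integrableOn_Icc_iff_integrableOn_Ioc]
    exact (my_sub_int hg hx).1)

lemma my_power {g : ℝ → ℝ} (hg : IntervalIntegrable g volume 0 1) :
    ∀ (n : ℕ), ∀ x ∈ Set.Icc (0:ℝ) 1,
      (∫ t in (0:ℝ)..x, g t * (∫ s in (0:ℝ)..t, g s) ^ n)
        = (∫ t in (0:ℝ)..x, g t) ^ (n + 1) / (n + 1) := by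
  intro n
  induction n with
  | zero => intro x hx; simp
  | succ n ih =>
    intro x hx
    have hgx : IntervalIntegrable g volume 0 x := my_sub_int hg hx
    have hgFn : IntervalIntegrable (fun t => g t * (∫ s in (0:ℝ)..t, g s) ^ n) volume 0 x :=
      hgx.mul_continuousOn ((my_F_cont hg hx).pow n)
    have key := my_parts hx.1 hgx hgFn
    -- rewrite the primitive of g·Fⁿ using ih
    have h1 : EqOn (fun t => g t * ∫ s in (0:ℝ)..t, (fun u => g u * (∫ s in (0:ℝ)..u, g s) ^ n) s)
        (fun t => (1 / (n + 1)) * (g t * (∫ s in (0:ℝ)..t, g s) ^ (n + 1))) (Set.uIcc 0 x) := by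
      intro t ht
      rw [uIcc_of_le hx.1] at ht
      have := ih t ⟨ht.1, le_trans ht.2 hx.2⟩
      simp only [this]
      ring
    rw [intervalIntegral.integral_congr h1, intervalIntegral.integral_const_mul,
      ih x hx] at key
    have hn : (0:ℝ) < n + 1 := by positivity
    simp only [mul_assoc, ← pow_succ] at key
    push_cast
    field_simp at key ⊢
    have hpow : (∫ s in (0:ℝ)..x, g s) * (∫ s in (0:ℝ)..x, g s) ^ (n + 1)
        = (∫ s in (0:ℝ)..x, g s) ^ (n + 1 + 1) := by ring
    rw [hpow] at key
    linarith [key]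

lemma my_real_exp_tsum (x : ℝ) : Real.exp x = ∑' n : ℕ, x ^ n / (Nat.factorial n : ℝ) := by
  rw [Real.exp_eq_exp_ℝ, NormedSpace.exp_eq_tsum ℝ]
  exact tsum_congr fun n => by rw [smul_eq_mul, div_eq_inv_mul]

lemma my_exp_shift (x : ℝ) : ∑' n : ℕ, x ^ (n + 1) / (Nat.factorial (n+1) : ℝ) = Real.exp x - 1 := by
  have hs : Summable (fun n : ℕ => x ^ n / (Nat.factorial n : ℝ)) := Real.summable_pow_div_factorial x
  have h0 := Summable.tsum_eq_zero_add hs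
  rw [my_real_exp_tsum, h0]
  simp

lemma my_exp_id {g : ℝ → ℝ} (hg : IntervalIntegrable g volume 0 1) :
    (∫ t in (0:ℝ)..1, g t * Real.exp (∫ s in (0:ℝ)..t, g s))
      = Real.exp (∫ t in (0:ℝ)..1, g t) - 1 := by
  set F : ℝ → ℝ := fun t => ∫ s in (0:ℝ)..t, g s with hF
  have hFc : ContinuousOn F (Set.Icc 0 1) := by
    have := my_F_cont hg (⟨zero_le_one, le_rfl⟩ : (1:ℝ) ∈ Set.Icc (0:ℝ) 1)
    rwa [uIcc_of_le zero_le_one] at this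
  obtain ⟨M, hM⟩ := (isCompact_Icc).exists_bound_of_continuousOn hFc
  have hM0 : 0 ≤ M := le_trans (norm_nonneg _) (hM 0 ⟨le_rfl, zero_le_one⟩)
  -- each summand is integrable on 0..1
  have hint : ∀ n : ℕ, IntervalIntegrable (fun t => g t * F t ^ n / (Nat.factorial n : ℝ)) volume 0 1 := by
    intro n
    have : IntervalIntegrable (fun t => g t * F t ^ n) volume 0 1 :=
      hg.mul_continuousOn (by
        rw [uIcc_of_le zero_le_one]; exact hFc.pow n)
    exact this.div_const _
  -- integral of each summand
  have hval : ∀ n : ℕ, (∫ t in (0:ℝ)..1, g t * F t ^ n / (Nat.factorial n : ℝ))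
      = F 1 ^ (n + 1) / (Nat.factorial (n+1) : ℝ) := by
    intro n
    have h1 : (∫ t in (0:ℝ)..1, g t * F t ^ n / (Nat.factorial n : ℝ))
        = (∫ t in (0:ℝ)..1, g t * F t ^ n) / (Nat.factorial n : ℝ) := by
      rw [← intervalIntegral.integral_div]
    rw [h1, my_power hg n 1 ⟨zero_le_one, le_rfl⟩]
    rw [div_div]
    congr 1
    rw [Nat.factorial_succ]
    push_cast; ring
  -- swap sum and integral
  have hm : ∀ n : ℕ, Integrable (fun t => g t * F t ^ n / (Nat.factorial n : ℝ))
      (volume.restrict (Set.Ioc (0:ℝ) 1)) := fun n => (hint n).1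
  have hgn : Integrable (fun t => ‖g t‖) (volume.restrict (Set.Ioc (0:ℝ) 1)) := hg.1.norm
  have hsum : Summable (fun n : ℕ =>
      ∫ t in Set.Ioc (0:ℝ) 1, ‖g t * F t ^ n / (Nat.factorial n : ℝ)‖) := by
    apply Summable.of_nonneg_of_le
      (fun n => integral_nonneg (fun t => norm_nonneg _)) (fun n => ?_)
      ((Real.summable_pow_div_factorial M).mul_right (∫ t in Set.Ioc (0:ℝ) 1, ‖g t‖))
    have hb : ∀ t ∈ Set.Ioc (0:ℝ) 1, ‖g t * F t ^ n / (Nat.factorial n : ℝ)‖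
        ≤ ‖g t‖ * (M ^ n / (Nat.factorial n : ℝ)) := by
      intro t ht
      have hFt : ‖F t‖ ≤ M := hM t ⟨ht.1.le, ht.2⟩
      have h1 : ‖g t * F t ^ n / (Nat.factorial n : ℝ)‖
          = ‖g t‖ * (‖F t‖ ^ n / (Nat.factorial n : ℝ)) := by
        rw [norm_div, norm_mul, norm_pow]
        rw [Real.norm_natCast]
        ring
      rw [h1]
      gcongr
    have h2 : (∫ t in Set.Ioc (0:ℝ) 1, ‖g t * F t ^ n / (Nat.factorial n : ℝ)‖)
        ≤ ∫ t in Set.Ioc (0:ℝ) 1, ‖g t‖ * (M ^ n / (Nat.factorial n : ℝ)) :=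
      setIntegral_mono_on (hm n).norm (hgn.mul_const _) measurableSet_Ioc hb
    rw [MeasureTheory.integral_mul_const] at h2
    linarith [h2]
  have hswap := MeasureTheory.integral_tsum_of_summable_integral_norm hm hsum
  -- pointwise identity : ∑' n, g t * F t ^ n / n! = g t * exp (F t)
  have hpt : ∀ t : ℝ, (∑' n : ℕ, g t * F t ^ n / (Nat.factorial n : ℝ))
      = g t * Real.exp (F t) := by
    intro t
    rw [my_real_exp_tsum (F t), ← tsum_mul_left]
    exact tsum_congr fun n => by rw [mul_div_assoc]
  -- conclude
  have hL : (∫ t in Set.Ioc (0:ℝ) 1, g t * Real.exp (F t))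
      = ∑' n : ℕ, ∫ t in Set.Ioc (0:ℝ) 1, g t * F t ^ n / (Nat.factorial n : ℝ) := by
    rw [hswap]
    apply setIntegral_congr_fun measurableSet_Ioc
    intro t _
    exact (hpt t).symm
  have hI : ∀ n : ℕ, (∫ t in Set.Ioc (0:ℝ) 1, g t * F t ^ n / (Nat.factorial n : ℝ))
      = F 1 ^ (n + 1) / (Nat.factorial (n+1) : ℝ) := by
    intro n
    rw [← intervalIntegral.integral_of_le zero_le_one]
    exact hval n
  rw [intervalIntegral.integral_of_le zero_le_one]
  show (∫ t in Set.Ioc (0:ℝ) 1, g t * Real.exp (F t)) = Real.exp (F 1) - 1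
  rw [hL]
  calc (∑' n : ℕ, ∫ t in Set.Ioc (0:ℝ) 1, g t * F t ^ n / (Nat.factorial n : ℝ))
      = ∑' n : ℕ, F 1 ^ (n + 1) / (Nat.factorial (n+1) : ℝ) := tsum_congr hI
    _ = Real.exp (F 1) - 1 := my_exp_shift (F 1)

lemma my_cs_bound {g : ℝ → ℝ} (hg : IntervalIntegrable g volume 0 1)
    (hg2 : IntervalIntegrable (fun z => (g z) ^ 2) volume 0 1)
    {u v : ℝ} (hu : 0 < u)
    (hu' : (∫ z in (0:ℝ)..(1:ℝ), Real.exp (2 * ∫ t in (0:ℝ)..z, g t)) = u)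
    (hv : Real.exp (∫ t in (0:ℝ)..(1:ℝ), g t) = v) :
    4 * (v - 1) ^ 2 / u ≤ 4 * ∫ z in (0:ℝ)..(1:ℝ), (g z) ^ 2 := by
  set F : ℝ → ℝ := fun t => ∫ s in (0:ℝ)..t, g s with hF
  set E : ℝ → ℝ := fun t => Real.exp (F t) with hE
  have hFc : ContinuousOn F (Set.uIcc 0 1) :=
    my_F_cont hg (⟨zero_le_one, le_rfl⟩ : (1:ℝ) ∈ Set.Icc (0:ℝ) 1)
  have hEc : ContinuousOn E (Set.uIcc 0 1) := Real.continuous_exp.comp_continuousOn hFc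
  have hgE : IntervalIntegrable (fun t => g t * E t) volume 0 1 := hg.mul_continuousOn hEc
  have hE2 : IntervalIntegrable (fun t => (E t) ^ 2) volume 0 1 :=
    (hEc.pow 2).intervalIntegrable
  have hU : (∫ z in (0:ℝ)..(1:ℝ), (E z) ^ 2) = u := by
    rw [← hu']
    apply intervalIntegral.integral_congr
    intro z _
    show (E z) ^ 2 = Real.exp (2 * F z)
    rw [hE]
    rw [two_mul, Real.exp_add, sq]
  have hS : (∫ z in (0:ℝ)..(1:ℝ), g z * E z) = v - 1 := by
    have := my_exp_id hg
    rw [hE]; rw [this, hv]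
  have hnn : 0 ≤ ∫ z in (0:ℝ)..(1:ℝ), (u * g z - (v - 1) * E z) ^ 2 := by
    apply intervalIntegral.integral_nonneg zero_le_one
    intro t _; positivity
  have hexp : ∀ z : ℝ, (u * g z - (v - 1) * E z) ^ 2
      = u ^ 2 * (g z) ^ 2 - (2 * u * (v - 1)) * (g z * E z) + (v - 1) ^ 2 * (E z) ^ 2 := by
    intro z; ring
  have hsplit : (∫ z in (0:ℝ)..(1:ℝ), (u * g z - (v - 1) * E z) ^ 2)
      = u ^ 2 * (∫ z in (0:ℝ)..(1:ℝ), (g z) ^ 2)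
        - (2 * u * (v - 1)) * (∫ z in (0:ℝ)..(1:ℝ), g z * E z)
        + (v - 1) ^ 2 * (∫ z in (0:ℝ)..(1:ℝ), (E z) ^ 2) := by
    simp only [hexp]
    rw [intervalIntegral.integral_add (((hg2.const_mul _).sub
        (hgE.const_mul _))) (hE2.const_mul _),
      intervalIntegral.integral_sub (hg2.const_mul _) (hgE.const_mul _),
      intervalIntegral.integral_const_mul, intervalIntegral.integral_const_mul,
      intervalIntegral.integral_const_mul]
  rw [hsplit, hS, hU] at hnn
  have hK : (v - 1) ^ 2 ≤ u * ∫ z in (0:ℝ)..(1:ℝ), (g z) ^ 2 := by nlinarith [hnn, hu]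
  rw [div_le_iff₀ hu]
  nlinarith [hK]


noncomputable def myh (v γ z : ℝ) : ℝ :=
  (1 - z) * Real.exp (-(γ * z)) + z * v * Real.exp (-(γ * (1 - z)))

noncomputable def myh' (v γ z : ℝ) : ℝ :=
  (-1 - γ * (1 - z)) * Real.exp (-(γ * z)) + v * (1 + γ * z) * Real.exp (-(γ * (1 - z)))

lemma myh_deriv (v γ z : ℝ) : HasDerivAt (myh v γ) (myh' v γ z) z := by
  have d1 : HasDerivAt (fun z : ℝ => -(γ * z)) (-γ) z := by
    have h := ((hasDerivAt_id z).const_mul γ).neg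
    simp only [id_eq, mul_one] at h; exact h
  have e1 := d1.exp
  have p1 : HasDerivAt (fun z : ℝ => 1 - z) (-1) z := by
    simpa using ((hasDerivAt_id z).const_mul (1:ℝ)).const_sub 1
  have d2 : HasDerivAt (fun z : ℝ => -(γ * (1 - z))) γ z := by
    have h := (p1.const_mul γ).neg
    simp only [mul_neg, mul_one, neg_neg] at h; exact h
  have e2 := d2.exp
  have p2 : HasDerivAt (fun z : ℝ => z * v) v z := by
    simpa using (hasDerivAt_id z).mul_const v
  have key := (p1.mul e1).add (p2.mul e2)
  have : HasDerivAt (fun z : ℝ => (1 - z) * Real.exp (-(γ * z)) + z * v * Real.exp (-(γ * (1 - z))))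
      (myh' v γ z) z := by
    refine key.congr_deriv ?_
    unfold myh'
    ring
  exact this

lemma myh_pos {v : ℝ} (hv : 0 < v) (γ : ℝ) {z : ℝ} (hz : z ∈ Set.Icc (0:ℝ) 1) :
    0 < myh v γ z := by
  unfold myh
  have h1 : 0 ≤ (1 - z) * Real.exp (-(γ * z)) :=
    mul_nonneg (by linarith [hz.2]) (Real.exp_pos _).le
  have h2 : 0 ≤ z * v * Real.exp (-(γ * (1 - z))) :=
    mul_nonneg (mul_nonneg hz.1 hv.le) (Real.exp_pos _).le
  rcases lt_or_eq_of_le hz.2 with h3 | h3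
  · have : 0 < (1 - z) * Real.exp (-(γ * z)) :=
      mul_pos (by linarith) (Real.exp_pos _)
    linarith
  · subst h3
    have := Real.exp_pos (-(γ * (1 - 1)))
    nlinarith

lemma myh_cont (v γ : ℝ) : Continuous (myh v γ) := by
  unfold myh; fun_prop

lemma myh'_cont (v γ : ℝ) : Continuous (myh' v γ) := by
  unfold myh'; fun_prop

lemma myh_zero (v γ : ℝ) : myh v γ 0 = 1 := by simp [myh]

lemma myh_one (v γ : ℝ) : myh v γ 1 = v := by simp [myh]

lemma myphi_cont (v : ℝ) : Continuous (fun γ => ∫ z in (0:ℝ)..(1:ℝ), (myh v γ z) ^ 2) := by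
  apply intervalIntegral.continuous_parametric_intervalIntegral_of_continuous'
  unfold myh Function.uncurry
  fun_prop

lemma my_exp_int (c : ℝ) (hc : c ≠ 0) :
    (∫ z in (0:ℝ)..(1:ℝ), Real.exp (-(c * z))) = (1 - Real.exp (-c)) / c := by
  have hd : ∀ z ∈ Set.uIcc (0:ℝ) 1,
      HasDerivAt (fun z => -Real.exp (-(c * z)) / c) (Real.exp (-(c * z))) z := by
    intro z _
    have d : HasDerivAt (fun z : ℝ => -(c * z)) (-c) z := by
      have h := ((hasDerivAt_id z).const_mul c).neg
      simp only [id_eq, mul_one] at h; exact h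
    have e := d.exp
    have := (e.neg).div_const c
    refine this.congr_deriv ?_
    field_simp
  rw [intervalIntegral.integral_eq_sub_of_hasDerivAt hd
    ((by fun_prop : Continuous fun z => Real.exp (-(c * z))).intervalIntegrable 0 1)]
  simp [Real.exp_zero]
  ring

lemma my_exp_int' (c : ℝ) (hc : c ≠ 0) :
    (∫ z in (0:ℝ)..(1:ℝ), Real.exp (-(c * (1 - z)))) = (1 - Real.exp (-c)) / c := by
  have hd : ∀ z ∈ Set.uIcc (0:ℝ) 1,
      HasDerivAt (fun z => Real.exp (-(c * (1 - z))) / c) (Real.exp (-(c * (1 - z)))) z := by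
    intro z _
    have p1 : HasDerivAt (fun z : ℝ => 1 - z) (-1) z := by
      simpa using ((hasDerivAt_id z).const_mul (1:ℝ)).const_sub 1
    have d : HasDerivAt (fun z : ℝ => -(c * (1 - z))) c z := by
      have h := (p1.const_mul c).neg
      simp only [mul_neg, mul_one, neg_neg] at h; exact h
    have := (d.exp).div_const c
    refine this.congr_deriv ?_
    field_simp
  rw [intervalIntegral.integral_eq_sub_of_hasDerivAt hd
    ((by fun_prop : Continuous fun z => Real.exp (-(c * (1 - z)))).intervalIntegrable 0 1)]
  simp [Real.exp_zero]
  ring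

lemma myphi_upper {v : ℝ} (hv : 0 < v) {γ : ℝ} (hγ : 0 < γ) :
    (∫ z in (0:ℝ)..(1:ℝ), (myh v γ z) ^ 2) ≤ (1 + v ^ 2) / γ := by
  have pt : ∀ z ∈ Set.Icc (0:ℝ) 1, (myh v γ z) ^ 2
      ≤ 2 * Real.exp (-(2 * γ * z)) + 2 * v ^ 2 * Real.exp (-(2 * γ * (1 - z))) := by
    intro z hz
    have e1 : Real.exp (-(γ * z)) ^ 2 = Real.exp (-(2 * γ * z)) := by
      rw [sq, ← Real.exp_add]; ring_nf
    have e2 : Real.exp (-(γ * (1 - z))) ^ 2 = Real.exp (-(2 * γ * (1 - z))) := by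
      rw [sq, ← Real.exp_add]; ring_nf
    have hA : ((1 - z) * Real.exp (-(γ * z))) ^ 2 ≤ Real.exp (-(2 * γ * z)) := by
      rw [← e1]
      have h1 : (1 - z) ^ 2 ≤ 1 := by nlinarith [hz.1, hz.2]
      nlinarith [sq_nonneg (Real.exp (-(γ * z))), sq_nonneg (1 - z)]
    have hB : (z * v * Real.exp (-(γ * (1 - z)))) ^ 2
        ≤ v ^ 2 * Real.exp (-(2 * γ * (1 - z))) := by
      rw [← e2]
      have h1 : z ^ 2 ≤ 1 := by nlinarith [hz.1, hz.2]
      nlinarith [mul_nonneg (sq_nonneg (v * Real.exp (-(γ * (1 - z)))))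
        (by nlinarith : (0:ℝ) ≤ 1 - z ^ 2)]
    unfold myh
    nlinarith [sq_nonneg ((1 - z) * Real.exp (-(γ * z)) - z * v * Real.exp (-(γ * (1 - z))))]
  have hcR : Continuous fun z : ℝ => 2 * Real.exp (-(2 * γ * z))
      + 2 * v ^ 2 * Real.exp (-(2 * γ * (1 - z))) := by fun_prop
  have hmono := intervalIntegral.integral_mono_on zero_le_one
    (Continuous.intervalIntegrable (μ := volume) ((myh_cont v γ).pow 2) 0 1)
    (Continuous.intervalIntegrable (μ := volume) hcR 0 1) pt
  have hsplit : (∫ z in (0:ℝ)..(1:ℝ), (2 * Real.exp (-(2 * γ * z))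
      + 2 * v ^ 2 * Real.exp (-(2 * γ * (1 - z)))))
      = 2 * ((1 - Real.exp (-(2 * γ))) / (2 * γ))
        + 2 * v ^ 2 * ((1 - Real.exp (-(2 * γ))) / (2 * γ)) := by
    rw [intervalIntegral.integral_add
      (((by fun_prop : Continuous fun z => Real.exp (-(2 * γ * z))).intervalIntegrable 0 1).const_mul 2)
      (((by fun_prop : Continuous fun z => Real.exp (-(2 * γ * (1 - z)))).intervalIntegrable 0 1).const_mul _),
      intervalIntegral.integral_const_mul, intervalIntegral.integral_const_mul,
      my_exp_int (2 * γ) (by positivity), my_exp_int' (2 * γ) (by positivity)]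
  rw [hsplit] at hmono
  have hE0 : 0 ≤ Real.exp (-(2 * γ)) := (Real.exp_pos _).le
  have hE1 : Real.exp (-(2 * γ)) ≤ 1 := by
    rw [← Real.exp_zero]
    exact Real.exp_le_exp.2 (by linarith)
  have halg : 2 * ((1 - Real.exp (-(2 * γ))) / (2 * γ))
      + 2 * v ^ 2 * ((1 - Real.exp (-(2 * γ))) / (2 * γ)) ≤ (1 + v ^ 2) / γ := by
    have heq : 2 * ((1 - Real.exp (-(2 * γ))) / (2 * γ))
        + 2 * v ^ 2 * ((1 - Real.exp (-(2 * γ))) / (2 * γ))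
        = ((1 + v ^ 2) * (1 - Real.exp (-(2 * γ)))) / γ := by
      field_simp
    rw [heq, div_le_div_iff₀ hγ hγ]
    nlinarith [mul_nonneg (mul_nonneg (by nlinarith [sq_nonneg v] : (0:ℝ) ≤ 1 + v ^ 2) hγ.le) hE0]
  simp only [Pi.pow_apply] at hmono
  linarith

lemma myphi_lower {v : ℝ} (hv : 0 < v) {γ : ℝ} (hγ : γ ≤ 0) :
    Real.exp (-γ) / 64 ≤ ∫ z in (0:ℝ)..(1:ℝ), (myh v γ z) ^ 2 := by
  have hc : Continuous fun z => (myh v γ z) ^ 2 := (myh_cont v γ).pow 2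
  have hint : ∀ a b : ℝ, IntervalIntegrable (fun z => (myh v γ z) ^ 2) volume a b :=
    fun a b => hc.intervalIntegrable a b
  have hs1 : (∫ z in (0:ℝ)..(1/2:ℝ), (myh v γ z) ^ 2)
      + (∫ z in (1/2:ℝ)..(1:ℝ), (myh v γ z) ^ 2) = ∫ z in (0:ℝ)..(1:ℝ), (myh v γ z) ^ 2 :=
    intervalIntegral.integral_add_adjacent_intervals (hint 0 (1/2)) (hint (1/2) 1)
  have hs2 : (∫ z in (1/2:ℝ)..(3/4:ℝ), (myh v γ z) ^ 2)
      + (∫ z in (3/4:ℝ)..(1:ℝ), (myh v γ z) ^ 2) = ∫ z in (1/2:ℝ)..(1:ℝ), (myh v γ z) ^ 2 :=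
    intervalIntegral.integral_add_adjacent_intervals (hint (1/2) (3/4)) (hint (3/4) 1)
  have hn1 : 0 ≤ ∫ z in (0:ℝ)..(1/2:ℝ), (myh v γ z) ^ 2 :=
    intervalIntegral.integral_nonneg (by norm_num) (fun t _ => sq_nonneg _)
  have hn2 : 0 ≤ ∫ z in (3/4:ℝ)..(1:ℝ), (myh v γ z) ^ 2 :=
    intervalIntegral.integral_nonneg (by norm_num) (fun t _ => sq_nonneg _)
  have pt : ∀ z ∈ Set.Icc (1/2:ℝ) (3/4:ℝ),
      Real.exp (-γ) / 16 ≤ (myh v γ z) ^ 2 := by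
    intro z hz
    have hz1 : (1:ℝ)/2 ≤ z := hz.1
    have hz2 : z ≤ (3:ℝ)/4 := hz.2
    have e1 : Real.exp (-(γ * z)) ^ 2 = Real.exp (-(2 * γ * z)) := by
      rw [sq, ← Real.exp_add]; ring_nf
    have hE : Real.exp (-γ) ≤ Real.exp (-(2 * γ * z)) :=
      Real.exp_le_exp.2 (by nlinarith)
    have hA : (1/4:ℝ) * Real.exp (-(γ * z)) ≤ (1 - z) * Real.exp (-(γ * z)) := by
      have := (Real.exp_pos (-(γ * z))).le
      nlinarith
    have hB : 0 ≤ z * v * Real.exp (-(γ * (1 - z))) := by positivity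
    have hA0 : 0 ≤ (1/4:ℝ) * Real.exp (-(γ * z)) := by positivity
    unfold myh
    nlinarith [sq_nonneg (Real.exp (-(γ * z)))]
  have hmid := intervalIntegral.integral_mono_on (by norm_num : (1/2:ℝ) ≤ 3/4)
    ((continuous_const : Continuous fun _ : ℝ => Real.exp (-γ) / 16).intervalIntegrable _ _)
    (hint (1/2) (3/4)) pt
  rw [intervalIntegral.integral_const] at hmid
  have : ((3/4:ℝ) - 1/2) • (Real.exp (-γ) / 16) = Real.exp (-γ) / 64 := by
    rw [smul_eq_mul]; ring
  rw [this] at hmid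
  linarith

lemma my_nonempty {u v : ℝ} (hu : 0 < u) (hv : 0 < v) :
    ∃ g : ℝ → ℝ,
      IntervalIntegrable g volume 0 1 ∧
      IntervalIntegrable (fun z => (g z) ^ 2) volume 0 1 ∧
      (∫ z in (0:ℝ)..(1:ℝ), Real.exp (2 * ∫ t in (0:ℝ)..z, g t)) = u ∧
      Real.exp (∫ t in (0:ℝ)..(1:ℝ), g t) = v := by
  set φ : ℝ → ℝ := fun γ => ∫ z in (0:ℝ)..(1:ℝ), (myh v γ z) ^ 2 with hφdef
  set γ₁ : ℝ := (1 + v ^ 2) / u + 1 with hγ₁def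
  set γ₀ : ℝ := -|Real.log (64 * u)| - 1 with hγ₀def
  have hγ₁pos : 0 < γ₁ := by positivity
  have hγ₀neg : γ₀ ≤ 0 := by
    have := abs_nonneg (Real.log (64 * u)); rw [hγ₀def]; linarith
  have h01 : γ₀ ≤ γ₁ := by linarith
  have hup : φ γ₁ ≤ u := by
    refine (myphi_upper hv hγ₁pos).trans ?_
    rw [div_le_iff₀ hγ₁pos]
    have h2 : u * γ₁ = (1 + v ^ 2) + u := by
      rw [hγ₁def]; field_simp
    rw [h2]; linarith
  have hlo : u ≤ φ γ₀ := by
    refine le_trans ?_ (myphi_lower hv hγ₀neg)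
    have h1 : Real.log (64 * u) ≤ -γ₀ := by
      rw [hγ₀def]; have := le_abs_self (Real.log (64 * u)); linarith
    have h2 : (64 : ℝ) * u ≤ Real.exp (-γ₀) := by
      calc (64:ℝ) * u = Real.exp (Real.log (64 * u)) := (Real.exp_log (by positivity)).symm
        _ ≤ _ := Real.exp_le_exp.2 h1
    linarith
  obtain ⟨γ, _, hγu⟩ := intermediate_value_Icc' h01 ((myphi_cont v).continuousOn)
    (⟨hup, hlo⟩ : u ∈ Set.Icc (φ γ₁) (φ γ₀))
  set g : ℝ → ℝ := fun z => myh' v γ z / myh v γ z with hgdef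
  have hgc : ContinuousOn g (Set.Icc 0 1) :=
    ((myh'_cont v γ).continuousOn).div ((myh_cont v γ).continuousOn)
      (fun z hz => (myh_pos hv γ hz).ne')
  have hgint : IntervalIntegrable g volume 0 1 :=
    (hgc.mono (by rw [uIcc_of_le zero_le_one] : Set.uIcc (0:ℝ) 1 ⊆ Set.Icc 0 1)).intervalIntegrable
  have hg2int : IntervalIntegrable (fun z => (g z) ^ 2) volume 0 1 :=
    ((hgc.pow 2).mono
      (by rw [uIcc_of_le zero_le_one] : Set.uIcc (0:ℝ) 1 ⊆ Set.Icc 0 1)).intervalIntegrable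
  have hlog : ∀ x ∈ Set.Icc (0:ℝ) 1, (∫ t in (0:ℝ)..x, g t) = Real.log (myh v γ x) := by
    intro x hx
    have h1 : ∀ t ∈ Set.uIcc (0:ℝ) x, HasDerivAt (fun z => Real.log (myh v γ z)) (g t) t := by
      intro t ht
      rw [uIcc_of_le hx.1] at ht
      have htI : t ∈ Set.Icc (0:ℝ) 1 := ⟨ht.1, ht.2.trans hx.2⟩
      exact (myh_deriv v γ t).log (myh_pos hv γ htI).ne'
    have h2 : IntervalIntegrable g volume 0 x :=
      hgint.mono_set (by
        rw [uIcc_of_le hx.1, uIcc_of_le zero_le_one]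
        exact Icc_subset_Icc le_rfl hx.2)
    rw [intervalIntegral.integral_eq_sub_of_hasDerivAt h1 h2, myh_zero, Real.log_one, sub_zero]
  refine ⟨g, hgint, hg2int, ?_, ?_⟩
  · have heq : EqOn (fun z => Real.exp (2 * ∫ t in (0:ℝ)..z, g t))
        (fun z => (myh v γ z) ^ 2) (Set.uIcc 0 1) := by
      intro z hz
      rw [uIcc_of_le zero_le_one] at hz
      have hpos := myh_pos hv γ hz
      show Real.exp (2 * ∫ t in (0:ℝ)..z, g t) = (myh v γ z) ^ 2
      rw [hlog z hz, two_mul, Real.exp_add, Real.exp_log hpos, sq]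
    rw [intervalIntegral.integral_congr heq]
    exact hγu
  · rw [hlog 1 ⟨zero_le_one, le_rfl⟩, Real.exp_log (by rw [myh_one]; exact hv), myh_one]


lemma my_key {a ϱ u v y : ℝ} (ha : 0 < a) (hϱ1 : -1 < ϱ) (hϱ0 : ϱ ≤ 0) (hu : 0 < u) :
    2 * a * y ≤ 2 * (v - 1) ^ 2 / u
      + (a / ((1 - ϱ ^ 2) * u)) * (y + u / 2 - ϱ * Real.sqrt (2 / a) * (v - 1)) ^ 2 := by
  set b := Real.sqrt (2 / a) with hbdef
  have hb2 : b ^ 2 = 2 / a := Real.sq_sqrt (by positivity)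
  have hab : a * b ^ 2 = 2 := by rw [hb2]; field_simp
  have hq : 0 < 1 - ϱ ^ 2 := by nlinarith
  have hden : 0 < (1 - ϱ ^ 2) * u := by positivity
  have key : 0 ≤ 2 * (1 - ϱ ^ 2) * (v - 1) ^ 2
      + a * (y + u / 2 - ϱ * b * (v - 1)) ^ 2 - 2 * a * y * ((1 - ϱ ^ 2) * u) := by
    have hid : 2 * (2 * (1 - ϱ ^ 2) * (v - 1) ^ 2
        + a * (y + u / 2 - ϱ * b * (v - 1)) ^ 2 - 2 * a * y * ((1 - ϱ ^ 2) * u))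
        = (2 * (v - 1) - a * b * ϱ * (y + u / 2)) ^ 2
          + 2 * a * (1 - ϱ ^ 2) * (y - u / 2) ^ 2 := by
      linear_combination (ϱ ^ 2 * (2 * (v - 1) ^ 2 - a * (y + u / 2) ^ 2)) * hab
    nlinarith [sq_nonneg (2 * (v - 1) - a * b * ϱ * (y + u / 2)),
      mul_nonneg (mul_nonneg ha.le hq.le) (sq_nonneg (y - u / 2))]
  rw [← sub_nonneg]
  have h2 : 2 * (v - 1) ^ 2 / u
      + (a / ((1 - ϱ ^ 2) * u)) * (y + u / 2 - ϱ * b * (v - 1)) ^ 2 - 2 * a * y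
      = (2 * (1 - ϱ ^ 2) * (v - 1) ^ 2
        + a * (y + u / 2 - ϱ * b * (v - 1)) ^ 2 - 2 * a * y * ((1 - ϱ ^ 2) * u))
        / ((1 - ϱ ^ 2) * u) := by
    field_simp
  rw [h2]
  positivity

lemma my_ratefun_lb {u v : ℝ} (hu : 0 < u) (hv : 0 < v) :
    4 * (v - 1) ^ 2 / u ≤ ratefun u v := by
  apply le_csInf
  · obtain ⟨g, h1, h2, h3, h4⟩ := my_nonempty hu hv
    exact ⟨4 * ∫ z in (0:ℝ)..(1:ℝ), (g z) ^ 2, g, h1, h2, h3, h4, rfl⟩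
  · rintro r ⟨g, h1, h2, h3, h4, rfl⟩
    exact my_cs_bound h1 h2 hu h3 h4

/-- Lower bound on the rate function: for `a > 0` and `ϱ ∈ (−1,0]`,
`J_X(y; a, ϱ) ≥ 2ay` for every `y`. -/
theorem ratefun_JX_lower_bound (a ϱ : ℝ) (ha : 0 < a) (hϱ : ϱ ∈ Set.Ioc (-1 : ℝ) 0)
    (JX : ℝ → ℝ)
    (hJX : ∀ y : ℝ, JX y =
      sInf {r : ℝ | ∃ u v : ℝ, 0 < u ∧ 0 < v ∧
        r = (1 / 2) * ratefun u v
          + (a / ((1 - ϱ ^ 2) * u)) * (y + u / 2 - ϱ * Real.sqrt (2 / a) * (v - 1)) ^ 2}) :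
    ∀ y : ℝ, 2 * a * y ≤ JX y := by
  intro y
  rw [hJX y]
  apply le_csInf
  · exact ⟨(1 / 2) * ratefun 1 1
      + (a / ((1 - ϱ ^ 2) * 1)) * (y + 1 / 2 - ϱ * Real.sqrt (2 / a) * (1 - 1)) ^ 2,
      1, 1, one_pos, one_pos, rfl⟩
  · rintro r ⟨u, v, hu, hv, rfl⟩
    have h1 : 2 * (v - 1) ^ 2 / u ≤ (1 / 2) * ratefun u v := by
      have h := my_ratefun_lb hu hv
      have e : 2 * (v - 1) ^ 2 / u = (1 / 2) * (4 * (v - 1) ^ 2 / u) := by ring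
      rw [e]; linarith
    have h2 := my_key (v := v) (y := y) ha hϱ.1 hϱ.2 hu
    linarith
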